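/- Suppose 2 ≤ p ≤ n−1 and 2p ≥ n. If λ ∈ 𝒫_p satisfies λ₁ ≥ λ₂ ≥ ⋯ ≥ λₙ, λ₁ ≥ 1, λₙ ≥ −λ₁/(2(p−1)), and λ_{n−p+1} + λ_{n−p+2} + ⋯ + λₙ ≥ 1/λ₁, then F^{nn}(λ) ≥ (λ₁/2)^{binom(n−1,p−1)} · (1/λ₁)^{binom(n−1,p) − 1} ≥ λ₁ / 2^{binom(n−1,p−1)}. (This is the key Case 2 estimate in the proof of Lemma 2.4; the last inequality uses that binom(n−1,p−1) ≥ binom(n−1,p) when 2p ≥ n.) -/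

import Mathlib

open Finset

/-- `F(λ) = ∏_{|I|=p} Σ_{i∈I} λ_i`, the product over all `p`-element subsets of `{1,…,n}`. -/
noncomputable def Fval (n p : ℕ) (lam : Fin n → ℝ) : ℝ :=
  ∏ I ∈ Finset.powersetCard p (Finset.univ : Finset (Fin n)), ∑ i ∈ I, lam i

/-- `F^{kk}(λ) = ∂F/∂λ_k = Σ_{|I|=p, k∈I} ∏_{|J|=p, J≠I} Σ_{i∈J} λ_i`. -/
noncomputable def Fkk (n p : ℕ) (k : Fin n) (lam : Fin n → ℝ) : ℝ :=
  ∑ I ∈ (Finset.powersetCard p (Finset.univ : Finset (Fin n))).filter (fun I => k ∈ I),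
    ∏ J ∈ (Finset.powersetCard p (Finset.univ : Finset (Fin n))).erase I, ∑ i ∈ J, lam i

/-- The Gårding cone `𝒫_p`: all sums of `p` of the entries are positive. -/
def Pcone (n p : ℕ) (lam : Fin n → ℝ) : Prop :=
  ∀ I ∈ Finset.powersetCard p (Finset.univ : Finset (Fin n)), 0 < ∑ i ∈ I, lam i


/-- The Case 2 estimate in the proof of Lemma 2.4: under the stated hypotheses,
`F^{nn}(λ) ≥ (λ₁/2)^(C(n−1,p−1)) · (1/λ₁)^(C(n−1,p)−1) ≥ λ₁/2^(C(n−1,p−1))`. -/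
theorem lemma24_case2 (n p : ℕ) (hp2 : 2 ≤ p) (hpn : p ≤ n - 1) (h2p : n ≤ 2 * p)
    (lam : Fin n → ℝ) (hP : Pcone n p lam)
    (hsort : ∀ i j : Fin n, i ≤ j → lam j ≤ lam i)
    (h1 : 1 ≤ lam ⟨0, by omega⟩)
    (hlast : -(lam ⟨0, by omega⟩) / (2 * ((p : ℝ) - 1)) ≤ lam ⟨n - 1, by omega⟩)
    (hsum : 1 / lam ⟨0, by omega⟩ ≤
        ∑ i ∈ Finset.univ.filter (fun i : Fin n => n - p ≤ (i : ℕ)), lam i) :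
    (lam ⟨0, by omega⟩ / 2) ^ ((n - 1).choose (p - 1)) *
        (1 / lam ⟨0, by omega⟩) ^ ((n - 1).choose p - 1) ≤
      Fkk n p ⟨n - 1, by omega⟩ lam ∧
    lam ⟨0, by omega⟩ / 2 ^ ((n - 1).choose (p - 1)) ≤
      (lam ⟨0, by omega⟩ / 2) ^ ((n - 1).choose (p - 1)) *
        (1 / lam ⟨0, by omega⟩) ^ ((n - 1).choose p - 1) := by
  classical
  have h0n : 0 < n := by omega
  have hnn : n - 1 < n := by omega
  have hnpn : n - p < n := by omega
  set e0 : Fin n := ⟨0, h0n⟩ with he0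
  set en : Fin n := ⟨n - 1, hnn⟩ with hen
  set enp : Fin n := ⟨n - p, hnpn⟩ with henp
  set T : Finset (Finset (Fin n)) := Finset.powersetCard p (Finset.univ : Finset (Fin n)) with hT
  set I₀ : Finset (Fin n) := Finset.univ.filter (fun i : Fin n => n - p ≤ (i : ℕ)) with hI0
  have h1 : 1 ≤ lam e0 := h1
  have hlast : -(lam e0) / (2 * ((p : ℝ) - 1)) ≤ lam en := hlast
  have hsum : 1 / lam e0 ≤ ∑ i ∈ I₀, lam i := hsum
  have hLpos : (0:ℝ) < lam e0 := lt_of_lt_of_le one_pos h1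
  have hI0card : I₀.card = p := by
    have h : I₀ = Finset.Ici enp := by
      ext i; simp only [hI0, Finset.mem_filter, Finset.mem_univ, true_and, Finset.mem_Ici, Fin.le_def, henp, Fin.val_mk]
    rw [h, Fin.card_Ici]
    simp [henp]; omega
  have hI0T : I₀ ∈ T := by
    rw [hT, Finset.mem_powersetCard]
    exact ⟨Finset.subset_univ _, hI0card⟩
  have he0I0 : e0 ∉ I₀ := by simp [hI0, he0]; omega
  have henI0 : en ∈ I₀ := by simp [hI0, hen]; omega
  have hSpos : ∀ J ∈ T, (0:ℝ) < ∑ i ∈ J, lam i := hP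
  -- minimality of I₀ sum
  have hmin : ∀ J ∈ T, ∑ i ∈ I₀, lam i ≤ ∑ i ∈ J, lam i := by
    intro J hJ
    have hJcard : J.card = p := (Finset.mem_powersetCard.mp hJ).2
    have h1' : ∑ i ∈ I₀ \ J, lam i ≤ (I₀ \ J).card • lam enp := by
      apply Finset.sum_le_card_nsmul
      intro i hi
      have : n - p ≤ (i : ℕ) := by
        have := Finset.mem_sdiff.mp hi
        simpa [hI0] using this.1
      exact hsort enp i (by simp [Fin.le_def, henp]; omega)
    have h2' : (J \ I₀).card • lam enp ≤ ∑ i ∈ J \ I₀, lam i := by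
      apply Finset.card_nsmul_le_sum
      intro i hi
      have : ¬ (n - p ≤ (i : ℕ)) := by
        have := Finset.mem_sdiff.mp hi
        simpa [hI0] using this.2
      exact hsort i enp (by simp [Fin.le_def, henp]; omega)
    have hcd : (I₀ \ J).card = (J \ I₀).card :=
      Finset.card_sdiff_comm (by rw [hI0card, hJcard])
    have e1 := Finset.sum_inter_add_sum_sdiff I₀ J lam
    have e2 := Finset.sum_inter_add_sum_sdiff J I₀ lam
    rw [Finset.inter_comm] at e2
    rw [hcd] at h1'
    rw [nsmul_eq_mul] at h1' h2'
    linarith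
  -- bound for sets containing e0
  have h0bound : ∀ J ∈ T, e0 ∈ J → lam e0 / 2 ≤ ∑ i ∈ J, lam i := by
    intro J hJ h0J
    have hJcard : J.card = p := (Finset.mem_powersetCard.mp hJ).2
    have hsplit : lam e0 + ∑ i ∈ J.erase e0, lam i = ∑ i ∈ J, lam i :=
      Finset.add_sum_erase J lam h0J
    have hec : (J.erase e0).card = p - 1 := by rw [Finset.card_erase_of_mem h0J, hJcard]
    have hlb : (J.erase e0).card • lam en ≤ ∑ i ∈ J.erase e0, lam i := by
      apply Finset.card_nsmul_le_sum
      intro i _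
      exact hsort i en (by simp [Fin.le_def, hen]; omega)
    rw [hec, nsmul_eq_mul] at hlb
    have hp1 : (0:ℝ) < (p:ℝ) - 1 := by
      have : (2:ℝ) ≤ (p:ℝ) := by exact_mod_cast hp2
      linarith
    have hcast : ((p - 1 : ℕ) : ℝ) = (p : ℝ) - 1 := by
      have : (1:ℕ) ≤ p := by omega
      push_cast [this]; ring
    have hen' : -(lam e0) / 2 ≤ ((p:ℝ) - 1) * lam en := by
      have := mul_le_mul_of_nonneg_left hlast (le_of_lt hp1)
      calc -(lam e0) / 2 = ((p:ℝ) - 1) * (-(lam e0) / (2 * ((p:ℝ) - 1))) := by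
            field_simp
        _ ≤ ((p:ℝ) - 1) * lam en := this
    rw [hcast] at hlb
    linarith
  -- counting
  have hfnot : T.filter (fun J => e0 ∉ J) = Finset.powersetCard p (Finset.univ.erase e0) := by
    ext J
    simp only [Finset.mem_filter, hT, Finset.mem_powersetCard, Finset.subset_erase]
    tauto
  have hcardnot : (T.filter (fun J => e0 ∉ J)).card = (n-1).choose p := by
    rw [hfnot, Finset.card_powersetCard, Finset.card_erase_of_mem (Finset.mem_univ _)]
    simp
  have hcardT : T.card = n.choose p := by
    rw [hT, Finset.card_powersetCard]; simp
  have hpascal : n.choose p = (n-1).choose (p-1) + (n-1).choose p := by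
    have hn' : n - 1 + 1 = n := by omega
    have hp' : p - 1 + 1 = p := by omega
    calc n.choose p = ((n-1)+1).choose ((p-1)+1) := by rw [hn', hp']
      _ = (n-1).choose (p-1) + (n-1).choose ((p-1)+1) := Nat.choose_succ_succ _ _
      _ = (n-1).choose (p-1) + (n-1).choose p := by rw [hp']
  have hcardyes : (T.filter (fun J => e0 ∈ J)).card = (n-1).choose (p-1) := by
    have := Finset.card_filter_add_card_filter_not (s := T) (p := fun J => e0 ∈ J)
    omega
  -- the key product bound
  set a := (n-1).choose (p-1) with ha
  set b := (n-1).choose p with hb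
  have hbpos : 1 ≤ b := Nat.choose_pos hpn
  have hapos : 0 < a := Nat.choose_pos (by omega)
  -- filter decomposition of T.erase I₀
  have hyes_eq : (T.erase I₀).filter (fun J => e0 ∈ J) = T.filter (fun J => e0 ∈ J) := by
    rw [Finset.filter_erase]
    apply Finset.erase_eq_of_notMem
    simp [he0I0]
  have hno_card : ((T.erase I₀).filter (fun J => e0 ∉ J)).card = b - 1 := by
    rw [Finset.filter_erase, Finset.card_erase_of_mem (by simp [hI0T, he0I0]), hcardnot]
  have hprod1 : (lam e0 / 2) ^ a ≤ ∏ J ∈ (T.erase I₀).filter (fun J => e0 ∈ J), ∑ i ∈ J, lam i := by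
    have h := Finset.prod_le_prod (s := (T.erase I₀).filter (fun J => e0 ∈ J))
      (f := fun _ => lam e0 / 2) (g := fun J => ∑ i ∈ J, lam i)
      (fun _ _ => by positivity) (by
        intro J hJ
        simp only [Finset.mem_filter, Finset.mem_erase] at hJ
        exact h0bound J hJ.1.2 hJ.2)
    have hcy : ((T.erase I₀).filter (fun J => e0 ∈ J)).card = a := by rw [hyes_eq, hcardyes]
    rw [Finset.prod_const, hcy] at h
    exact h
  have hprod2 : (1 / lam e0) ^ (b - 1) ≤
      ∏ J ∈ (T.erase I₀).filter (fun J => e0 ∉ J), ∑ i ∈ J, lam i := by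
    have h := Finset.prod_le_prod (s := (T.erase I₀).filter (fun J => e0 ∉ J))
      (f := fun _ => 1 / lam e0) (g := fun J => ∑ i ∈ J, lam i)
      (fun _ _ => by positivity) (by
        intro J hJ
        simp only [Finset.mem_filter, Finset.mem_erase] at hJ
        exact le_trans hsum (hmin J hJ.1.2))
    rw [Finset.prod_const, hno_card] at h
    exact h
  have hprodall : (lam e0 / 2) ^ a * (1 / lam e0) ^ (b - 1) ≤
      ∏ J ∈ T.erase I₀, ∑ i ∈ J, lam i := by
    rw [← Finset.prod_filter_mul_prod_filter_not (T.erase I₀) (fun J => e0 ∈ J)]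
    apply mul_le_mul hprod1 hprod2
    · positivity
    · exact le_trans (by positivity) hprod1
  have hFkk : ∏ J ∈ T.erase I₀, ∑ i ∈ J, lam i ≤ Fkk n p en lam := by
    show _ ≤ ∑ I ∈ T.filter (fun I => en ∈ I), ∏ J ∈ T.erase I, ∑ i ∈ J, lam i
    apply Finset.single_le_sum (f := fun I => ∏ J ∈ T.erase I, ∑ i ∈ J, lam i)
    · intro I hI
      apply Finset.prod_nonneg
      intro J hJ
      exact le_of_lt (hSpos J (Finset.mem_of_mem_erase hJ))
    · simp [hI0T, henI0]
  constructor
  · calc (lam e0 / 2) ^ a * (1 / lam e0) ^ (b - 1)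
        ≤ ∏ J ∈ T.erase I₀, ∑ i ∈ J, lam i := hprodall
      _ ≤ Fkk n p en lam := hFkk
      _ = Fkk n p ⟨n - 1, by omega⟩ lam := rfl
  · -- second inequality
    have hba : b ≤ a := by
      have hid := Nat.choose_succ_right_eq (n-1) (p-1)
      have hp' : p - 1 + 1 = p := by omega
      rw [hp'] at hid
      have hnp : n - 1 - (p - 1) = n - p := by omega
      rw [hnp] at hid
      -- hid : (n-1).choose p * p = (n-1).choose (p-1) * (n - p)
      have hle : b * p ≤ a * p := by
        rw [← ha, ← hb] at hid
        calc b * p = a * (n - p) := hid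
          _ ≤ a * p := Nat.mul_le_mul_left a (by omega)
      exact Nat.le_of_mul_le_mul_right hle (by omega)
    have hb1a : b - 1 ≤ a := by omega
    have hLne : lam e0 ≠ 0 := ne_of_gt hLpos
    have key : (lam e0 / 2) ^ a * (1 / lam e0) ^ (b - 1)
        = lam e0 ^ (a - (b-1)) / 2 ^ a := by
      rw [div_pow, one_div, inv_pow, pow_sub₀ _ hLne hb1a]
      field_simp
    rw [key]
    have hexp : 1 ≤ a - (b - 1) := by omega
    have : lam e0 ≤ lam e0 ^ (a - (b-1)) := by
      calc lam e0 = lam e0 ^ 1 := (pow_one _).symm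
        _ ≤ lam e0 ^ (a - (b-1)) := pow_le_pow_right₀ h1 hexp
    apply div_le_div_of_nonneg_right this (by positivity) |>.trans_eq rfl
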